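/- arXiv:1912.05830 — 6 statements merged into one kernel-verified Lean document; each statement's English description precedes it below -/
import Mathlib

section
/- Performance difference lemma: For any two policies π' and π and any initial state x₁ ∈ S, the difference of their values satisfies V^{π'}_1(x₁) − V^{π}_1(x₁) = Σ_{h=1}^{H} Σ_{x∈S} μ^{π'}_h(x) · Σ_{a∈A} Q^{π}_h(x,a) · (π'_h(a|x) − π_h(a|x)), where μ^{π'}_h is the distribution of the state at step h under policy π' started from x₁. -/
open Finset

variable {S A : Type*}

/-- Value function computed with `n` remaining recursion steps, at step `h`. -/
noncomputable def Vrem [Fintype S] [Fintype A] (P : ℕ → S → A → S → ℝ)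
    (r : ℕ → S → A → ℝ) (po : ℕ → S → A → ℝ) : ℕ → ℕ → S → ℝ
  | 0, _, _ => 0
  | (n+1), h, x => ∑ a, po h x a * (r h x a + ∑ x', P h x a x' * Vrem P r po n (h+1) x')

/-- Value function `V^π_h` of policy `po` in the episodic MDP with horizon `H`. -/
noncomputable def Vval [Fintype S] [Fintype A] (H : ℕ) (P : ℕ → S → A → S → ℝ)
    (r : ℕ → S → A → ℝ) (po : ℕ → S → A → ℝ) (h : ℕ) (x : S) : ℝ :=
  Vrem P r po (H + 1 - h) h x

/-- Action-value function `Q^π_h` of policy `po`. -/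
noncomputable def Qval [Fintype S] [Fintype A] (H : ℕ) (P : ℕ → S → A → S → ℝ)
    (r : ℕ → S → A → ℝ) (po : ℕ → S → A → ℝ) (h : ℕ) (x : S) (a : A) : ℝ :=
  r h x a + ∑ x', P h x a x' * Vval H P r po (h+1) x'

/-- Distribution `μ^π_h` of the state at step `h` under policy `po` started from `x₁`. -/
noncomputable def stateDist [Fintype S] [Fintype A] [DecidableEq S]
    (P : ℕ → S → A → S → ℝ) (po : ℕ → S → A → ℝ) (x₁ : S) : ℕ → S → ℝ
  | 0 => fun x => if x = x₁ then 1 else 0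
  | 1 => fun x => if x = x₁ then 1 else 0
  | (h+2) => fun x' => ∑ x, ∑ a, stateDist P po x₁ (h+1) x * po (h+1) x a * P (h+1) x a x'

lemma Vval_pdl [Fintype S] [Fintype A] (H : ℕ) (P : ℕ → S → A → S → ℝ)
    (r : ℕ → S → A → ℝ) (po : ℕ → S → A → ℝ) (h : ℕ) (hh : h ≤ H) (x : S) :
    Vval H P r po h x = ∑ a, po h x a * Qval H P r po h x a := by
  unfold Vval Qval
  have e : H + 1 - h = (H + 1 - (h+1)) + 1 := by omega
  rw [e, Vrem]; rfl

lemma Qval_sub [Fintype S] [Fintype A] (H : ℕ) (P : ℕ → S → A → S → ℝ)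
    (r : ℕ → S → A → ℝ) (po po' : ℕ → S → A → ℝ) (h : ℕ) (x : S) (a : A) :
    Qval H P r po' h x a = Qval H P r po h x a
      + ∑ x', P h x a x' * (Vval H P r po' (h+1) x' - Vval H P r po (h+1) x') := by
  simp only [Qval, mul_sub, Finset.sum_sub_distrib]
  ring

lemma pdl_step [Fintype S] [Fintype A] [DecidableEq S] (H : ℕ) (P : ℕ → S → A → S → ℝ)
    (r : ℕ → S → A → ℝ) (po po' : ℕ → S → A → ℝ) (x₁ : S) (m : ℕ) (hh : m + 1 ≤ H) :
    ∑ x, stateDist P po' x₁ (m+1) x * (Vval H P r po' (m+1) x - Vval H P r po (m+1) x)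
      = (∑ x, stateDist P po' x₁ (m+1) x *
          ∑ a, Qval H P r po (m+1) x a * (po' (m+1) x a - po (m+1) x a))
        + ∑ x', stateDist P po' x₁ (m+2) x' *
            (Vval H P r po' (m+2) x' - Vval H P r po (m+2) x') := by
  have hμ : ∀ x' : S, stateDist P po' x₁ (m+2) x'
      = ∑ x, ∑ a, stateDist P po' x₁ (m+1) x * po' (m+1) x a * P (m+1) x a x' := by
    intro x'; rw [stateDist]
  have step2 : ∑ x', stateDist P po' x₁ (m+2) x' *
        (Vval H P r po' (m+2) x' - Vval H P r po (m+2) x')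
      = ∑ x, ∑ a, ∑ x', stateDist P po' x₁ (m+1) x * po' (m+1) x a * P (m+1) x a x' *
          (Vval H P r po' (m+2) x' - Vval H P r po (m+2) x') := by
    simp only [hμ, Finset.sum_mul]
    rw [Finset.sum_comm]
    refine Finset.sum_congr rfl fun x _ => Finset.sum_comm
  rw [step2]
  rw [← Finset.sum_add_distrib]
  refine Finset.sum_congr rfl fun x _ => ?_
  rw [Vval_pdl H P r po' (m+1) hh x, Vval_pdl H P r po (m+1) hh x]
  have hQ : ∑ a, po' (m+1) x a * Qval H P r po' (m+1) x a
      = ∑ a, po' (m+1) x a * (Qval H P r po (m+1) x a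
          + ∑ x', P (m+1) x a x' * (Vval H P r po' (m+2) x' - Vval H P r po (m+2) x')) := by
    refine Finset.sum_congr rfl fun a _ => ?_
    rw [← Qval_sub]
  rw [hQ, mul_sub]
  simp only [Finset.mul_sum]
  rw [← Finset.sum_sub_distrib, ← Finset.sum_add_distrib]
  refine Finset.sum_congr rfl fun a _ => ?_
  have hs : ∑ x', stateDist P po' x₁ (m+1) x * po' (m+1) x a * P (m+1) x a x' *
        (Vval H P r po' (m+2) x' - Vval H P r po (m+2) x')
      = stateDist P po' x₁ (m+1) x * (po' (m+1) x a *
          ∑ x', P (m+1) x a x' * (Vval H P r po' (m+2) x' - Vval H P r po (m+2) x')) := by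
    simp only [Finset.mul_sum]
    exact Finset.sum_congr rfl fun x' _ => by ring
  rw [hs]
  ring

lemma pdl_tele [Fintype S] [Fintype A] [DecidableEq S] (H : ℕ) (P : ℕ → S → A → S → ℝ)
    (r : ℕ → S → A → ℝ) (po po' : ℕ → S → A → ℝ) (x₁ : S) :
    ∀ n h, 1 ≤ h → h + n = H + 1 →
    ∑ x, stateDist P po' x₁ h x * (Vval H P r po' h x - Vval H P r po h x)
      = ∑ k ∈ Finset.Icc h H, ∑ x, stateDist P po' x₁ k x *
          ∑ a, Qval H P r po k x a * (po' k x a - po k x a) := by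
  intro n
  induction n with
  | zero =>
    intro h h1 he
    have : h = H + 1 := by omega
    subst this
    rw [Finset.Icc_eq_empty (by omega), Finset.sum_empty]
    have hz : ∀ (q : ℕ → S → A → ℝ) (x : S), Vval H P r q (H+1) x = 0 := by
      intro q x; unfold Vval; rw [Nat.sub_self]; rfl
    simp [hz]
  | succ n ih =>
    intro h h1 he
    obtain ⟨m, rfl⟩ : ∃ m, h = m + 1 := ⟨h - 1, by omega⟩
    rw [pdl_step H P r po po' x₁ m (by omega), ih (m+2) (by omega) (by omega)]
    have hins : Finset.Icc (m+1) H = insert (m+1) (Finset.Icc (m+2) H) := by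
      ext k; simp only [Finset.mem_Icc, Finset.mem_insert]; omega
    rw [hins, Finset.sum_insert (by simp [Finset.mem_Icc])]

/-- Performance difference lemma. -/
theorem performance_difference [Fintype S] [Fintype A] [Nonempty A] [DecidableEq S]
    (H : ℕ) (hH : 1 ≤ H)
    (P : ℕ → S → A → S → ℝ)
    (hP0 : ∀ h ∈ Finset.Icc 1 H, ∀ x a x', 0 ≤ P h x a x')
    (hP1 : ∀ h ∈ Finset.Icc 1 H, ∀ x a, ∑ x', P h x a x' = 1)
    (r : ℕ → S → A → ℝ)
    (hr : ∀ h ∈ Finset.Icc 1 H, ∀ x a, 0 ≤ r h x a ∧ r h x a ≤ 1)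
    (po po' : ℕ → S → A → ℝ)
    (hpo0 : ∀ h ∈ Finset.Icc 1 H, ∀ x a, 0 ≤ po h x a)
    (hpo1 : ∀ h ∈ Finset.Icc 1 H, ∀ x, ∑ a, po h x a = 1)
    (hpo'0 : ∀ h ∈ Finset.Icc 1 H, ∀ x a, 0 ≤ po' h x a)
    (hpo'1 : ∀ h ∈ Finset.Icc 1 H, ∀ x, ∑ a, po' h x a = 1)
    (x₁ : S) :
    Vval H P r po' 1 x₁ - Vval H P r po 1 x₁ =
      ∑ h ∈ Finset.Icc 1 H, ∑ x, stateDist P po' x₁ h x *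
        ∑ a, Qval H P r po h x a * (po' h x a - po h x a) := by
  have T := pdl_tele H P r po po' x₁ H 1 le_rfl (by omega)
  rw [← T]
  simp [stateDist, ite_mul, Finset.sum_ite_eq']
end

section
/- One-step descent lemma for exponential-weight updates: Let A be a finite nonempty set, H > 0, α > 0, Q : A → [0,H], let p ∈ Δ(A) have full support, let p* ∈ Δ(A) be arbitrary, and define p' ∈ Δ(A) by p'(a) = p(a)·exp(α·Q(a)) / Σ_{a'} p(a')·exp(α·Q(a')). Then Σ_{a∈A} Q(a)·(p*(a) − p(a)) ≤ α·H²/2 + α^{−1}·( D_KL(p*‖p) − D_KL(p*‖p') ). -/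
open Finset

/-- KL divergence between distributions on a finite set (convention `0 · log 0 = 0`). -/
noncomputable def KLdiv {A : Type*} [Fintype A] (p q : A → ℝ) : ℝ :=
  ∑ a, p a * Real.log (p a / q a)

lemma exp_le_quadratic_of_nonpos {y : ℝ} (hy : y ≤ 0) :
    Real.exp y ≤ 1 + y + y ^ 2 / 2 := by
  have h1 := Real.quadratic_le_exp_of_nonneg (neg_nonneg.2 hy)
  have h2 : Real.exp y * Real.exp (-y) = 1 := by
    rw [← Real.exp_add]; simp
  have h3 : 0 < Real.exp y := Real.exp_pos y
  nlinarith [sq_nonneg y, sq_nonneg (y ^ 2), sq_nonneg (1 + y)]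

/-- One-step descent lemma for exponential-weight updates. -/
theorem one_step_descent {A : Type*} [Fintype A] [Nonempty A]
    (H α : ℝ) (hH : 0 < H) (hα : 0 < α)
    (Q : A → ℝ) (hQ0 : ∀ a, 0 ≤ Q a) (hQH : ∀ a, Q a ≤ H)
    (p : A → ℝ) (hp0 : ∀ a, 0 < p a) (hp1 : ∑ a, p a = 1)
    (pstar : A → ℝ) (hps0 : ∀ a, 0 ≤ pstar a) (hps1 : ∑ a, pstar a = 1)
    (p' : A → ℝ)
    (hp' : ∀ a, p' a = p a * Real.exp (α * Q a) / ∑ a', p a' * Real.exp (α * Q a')) :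
    ∑ a, Q a * (pstar a - p a) ≤
      α * H ^ 2 / 2 + α⁻¹ * (KLdiv pstar p - KLdiv pstar p') := by
  set Z : ℝ := ∑ a', p a' * Real.exp (α * Q a') with hZ
  have hZpos : 0 < Z :=
    Finset.sum_pos (fun a _ => mul_pos (hp0 a) (Real.exp_pos _)) univ_nonempty
  -- KL difference identity
  have hKL : KLdiv pstar p - KLdiv pstar p' = α * (∑ a, pstar a * Q a) - Real.log Z := by
    have : KLdiv pstar p - KLdiv pstar p'
        = ∑ a, pstar a * (α * Q a - Real.log Z) := by
      unfold KLdiv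
      rw [← Finset.sum_sub_distrib]
      refine Finset.sum_congr rfl fun a _ => ?_
      rcases eq_or_lt_of_le (hps0 a) with h | h
      · simp [← h]
      · rw [← mul_sub]
        congr 1
        have hp'pos : 0 < p' a := by
          rw [hp' a]; exact div_pos (mul_pos (hp0 a) (Real.exp_pos _)) hZpos
        rw [Real.log_div (ne_of_gt h) (ne_of_gt (hp0 a)),
          Real.log_div (ne_of_gt h) (ne_of_gt hp'pos), hp' a,
          Real.log_div (ne_of_gt (mul_pos (hp0 a) (Real.exp_pos _))) (ne_of_gt hZpos),
          Real.log_mul (ne_of_gt (hp0 a)) (Real.exp_ne_zero _), Real.log_exp]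
        ring
    rw [this]
    simp only [mul_sub]
    rw [Finset.sum_sub_distrib, ← Finset.sum_mul, hps1, one_mul, Finset.mul_sum]
    congr 1
    exact Finset.sum_congr rfl fun a _ => by ring
  -- log Z bound
  have hlogZ : Real.log Z ≤ α * (∑ a, Q a * p a) + α ^ 2 * H ^ 2 / 2 := by
    have hkey : Z * Real.exp (-(α * H)) ≤ 1 + α * ((∑ a, Q a * p a) - H) + α ^ 2 * H ^ 2 / 2 := by
      have : Z * Real.exp (-(α * H)) = ∑ a, p a * Real.exp (α * (Q a - H)) := by
        rw [hZ, Finset.sum_mul]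
        exact Finset.sum_congr rfl fun a _ => by
          rw [mul_assoc, ← Real.exp_add]; ring_nf
      rw [this]
      have hbd : ∀ a ∈ univ, p a * Real.exp (α * (Q a - H))
          ≤ p a * (1 + α * (Q a - H) + (α * (Q a - H)) ^ 2 / 2) := fun a _ => by
        refine mul_le_mul_of_nonneg_left ?_ (hp0 a).le
        exact exp_le_quadratic_of_nonpos
          (mul_nonpos_of_nonneg_of_nonpos hα.le (by linarith [hQH a]))
      calc ∑ a, p a * Real.exp (α * (Q a - H))
          ≤ ∑ a, p a * (1 + α * (Q a - H) + (α * (Q a - H)) ^ 2 / 2) :=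
            Finset.sum_le_sum hbd
        _ ≤ ∑ a, p a * (1 + α * (Q a - H) + α ^ 2 * H ^ 2 / 2) := by
            refine Finset.sum_le_sum fun a _ => ?_
            refine mul_le_mul_of_nonneg_left ?_ (hp0 a).le
            have h1 : (α * (Q a - H)) ^ 2 ≤ α ^ 2 * H ^ 2 := by
              rw [mul_pow]
              refine mul_le_mul_of_nonneg_left ?_ (sq_nonneg α)
              nlinarith [hQ0 a, hQH a]
            linarith
        _ = 1 + α * ((∑ a, Q a * p a) - H) + α ^ 2 * H ^ 2 / 2 := by
            rw [Finset.sum_congr rfl (fun a _ =>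
              by ring : ∀ a ∈ univ, p a * (1 + α * (Q a - H) + α ^ 2 * H ^ 2 / 2)
                = p a + α * (Q a * p a) - (α * H) * p a + (α ^ 2 * H ^ 2 / 2) * p a)]
            simp only [Finset.sum_add_distrib, Finset.sum_sub_distrib, ← Finset.mul_sum, hp1]
            ring
    have hlog1 : Real.log (Z * Real.exp (-(α * H))) ≤ Z * Real.exp (-(α * H)) - 1 :=
      Real.log_le_sub_one_of_pos (mul_pos hZpos (Real.exp_pos _))
    rw [Real.log_mul (ne_of_gt hZpos) (Real.exp_ne_zero _), Real.log_exp] at hlog1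
    linarith
  -- conclude
  have hsum : ∑ a, Q a * (pstar a - p a) = (∑ a, pstar a * Q a) - ∑ a, Q a * p a := by
    rw [← Finset.sum_sub_distrib]
    exact Finset.sum_congr rfl fun a _ => by ring
  rw [hsum, hKL]
  have hαinv : α⁻¹ * (α * (∑ a, pstar a * Q a) - Real.log Z)
      = (∑ a, pstar a * Q a) - α⁻¹ * Real.log Z := by
    field_simp
  rw [hαinv]
  have h2 : α⁻¹ * Real.log Z ≤ (∑ a, Q a * p a) + α * H ^ 2 / 2 := by
    have := mul_le_mul_of_nonneg_left hlogZ (inv_nonneg.2 hα.le)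
    calc α⁻¹ * Real.log Z ≤ α⁻¹ * (α * (∑ a, Q a * p a) + α ^ 2 * H ^ 2 / 2) := this
      _ = (∑ a, Q a * p a) + α * H ^ 2 / 2 := by field_simp
  linarith
end

section
/- Telescoped mirror-descent regret bound: Let A be a finite nonempty set, H > 0, α > 0, K ≥ 1. Let p¹ ∈ Δ(A) have full support, let Q^k : A → [0,H] for k ∈ [K], and define recursively p^{k+1}(a) = p^k(a)·exp(α·Q^k(a)) / Σ_{a'} p^k(a')·exp(α·Q^k(a')). Then for any p* ∈ Δ(A), Σ_{k=1}^{K} Σ_{a∈A} Q^k(a)·(p*(a) − p^k(a)) ≤ α·H²·K/2 + α^{−1}·D_KL(p*‖p¹). -/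
open Finset

lemma exp_le_quadratic {x : ℝ} (hx : x ≤ 0) : Real.exp x ≤ 1 + x + x ^ 2 / 2 := by
  have hd : ∀ y : ℝ, HasDerivAt (fun t : ℝ => 1 + t + t ^ 2 / 2 - Real.exp t)
      (1 + y - Real.exp y) y := by
    intro y
    have h1 : HasDerivAt (fun t : ℝ => 1 + t + t ^ 2 / 2) (1 + y) y := by
      have := (((hasDerivAt_id y).const_add 1).add ((hasDerivAt_pow 2 y).div_const 2))
      exact this.congr_deriv (by ring)
    exact h1.sub (Real.hasDerivAt_exp y)
  have hanti : AntitoneOn (fun t : ℝ => 1 + t + t ^ 2 / 2 - Real.exp t) (Set.Iic 0) := by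
    apply antitoneOn_of_deriv_nonpos (convex_Iic 0)
    · exact (Continuous.continuousOn (by continuity))
    · intro y hy
      exact (hd y).differentiableAt.differentiableWithinAt
    · intro y hy
      rw [(hd y).deriv]
      have := Real.add_one_le_exp y
      linarith
  have := hanti (Set.mem_Iic.mpr hx) (Set.mem_Iic.mpr le_rfl) hx
  simp only [Real.exp_zero] at this
  linarith

lemma KLdiv_nonneg {A : Type*} [Fintype A] (p q : A → ℝ)
    (hp0 : ∀ a, 0 ≤ p a) (hp1 : ∑ a, p a = 1)
    (hq0 : ∀ a, 0 < q a) (hq1 : ∑ a, q a = 1) : 0 ≤ KLdiv p q := by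
  have key : ∀ a, p a - q a ≤ p a * Real.log (p a / q a) := by
    intro a
    rcases eq_or_lt_of_le (hp0 a) with h | h
    · rw [← h]; simp; exact (hq0 a).le
    · have hlog : Real.log (q a / p a) ≤ q a / p a - 1 :=
        Real.log_le_sub_one_of_pos (div_pos (hq0 a) h)
      rw [Real.log_div (hq0 a).ne' h.ne'] at hlog
      rw [Real.log_div h.ne' (hq0 a).ne']
      have : (1 : ℝ) - q a / p a ≤ Real.log (p a) - Real.log (q a) := by linarith
      have h2 := mul_le_mul_of_nonneg_left this h.le
      rw [mul_sub, mul_one, mul_div_cancel₀ _ h.ne'] at h2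
      linarith
  calc (0 : ℝ) = ∑ a, (p a - q a) := by rw [Finset.sum_sub_distrib, hp1, hq1]; ring
    _ ≤ _ := Finset.sum_le_sum (fun a _ => key a)

lemma telescope_Icc (f : ℕ → ℝ) (n : ℕ) :
    ∑ k ∈ Finset.Icc 1 n, (f k - f (k + 1)) = f 1 - f (n + 1) := by
  induction n with
  | zero => simp
  | succ m ih => rw [Finset.sum_Icc_succ_top (by omega : 1 ≤ m + 1), ih]; ring

/-- Telescoped mirror-descent regret bound. -/
theorem mirror_descent_regret {A : Type*} [Fintype A] [Nonempty A]
    (H α : ℝ) (hH : 0 < H) (hα : 0 < α)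
    (K : ℕ) (hK : 1 ≤ K)
    (p : ℕ → A → ℝ) (hp10 : ∀ a, 0 < p 1 a) (hp11 : ∑ a, p 1 a = 1)
    (Q : ℕ → A → ℝ)
    (hQ0 : ∀ k ∈ Finset.Icc 1 K, ∀ a, 0 ≤ Q k a)
    (hQH : ∀ k ∈ Finset.Icc 1 K, ∀ a, Q k a ≤ H)
    (hrec : ∀ k ∈ Finset.Icc 1 K, ∀ a,
      p (k+1) a = p k a * Real.exp (α * Q k a) / ∑ a', p k a' * Real.exp (α * Q k a'))
    (pstar : A → ℝ) (hps0 : ∀ a, 0 ≤ pstar a) (hps1 : ∑ a, pstar a = 1) :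
    ∑ k ∈ Finset.Icc 1 K, ∑ a, Q k a * (pstar a - p k a) ≤
      α * H ^ 2 * K / 2 + α⁻¹ * KLdiv pstar (p 1) := by
  -- positivity and normalization of all iterates
  have hpos : ∀ k, 1 ≤ k → k ≤ K + 1 → (∀ a, 0 < p k a) ∧ ∑ a, p k a = 1 := by
    intro k hk1
    induction k, hk1 using Nat.le_induction with
    | base => intro _; exact ⟨hp10, hp11⟩
    | succ n hn ih =>
      intro hle
      have hnK : n ∈ Finset.Icc 1 K := Finset.mem_Icc.mpr ⟨hn, by omega⟩
      obtain ⟨hppos, hpsum⟩ := ih (by omega)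
      have hZ : 0 < ∑ a', p n a' * Real.exp (α * Q n a') :=
        Finset.sum_pos (fun a _ => mul_pos (hppos a) (Real.exp_pos _)) Finset.univ_nonempty
      constructor
      · intro a
        rw [hrec n hnK a]
        exact div_pos (mul_pos (hppos a) (Real.exp_pos _)) hZ
      · have : ∑ a, p (n + 1) a = ∑ a, p n a * Real.exp (α * Q n a) /
            ∑ a', p n a' * Real.exp (α * Q n a') :=
          Finset.sum_congr rfl (fun a _ => hrec n hnK a)
        rw [this, ← Finset.sum_div, div_self hZ.ne']
  -- one-step bound
  have step : ∀ k ∈ Finset.Icc 1 K, ∑ a, Q k a * (pstar a - p k a) ≤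
      α * H ^ 2 / 2 + α⁻¹ * (KLdiv pstar (p k) - KLdiv pstar (p (k + 1))) := by
    intro k hk
    rw [Finset.mem_Icc] at hk
    obtain ⟨hppos, hpsum⟩ := hpos k hk.1 (by omega)
    have hkI : k ∈ Finset.Icc 1 K := Finset.mem_Icc.mpr hk
    set Z := ∑ a', p k a' * Real.exp (α * Q k a') with hZdef
    have hZ : 0 < Z :=
      Finset.sum_pos (fun a _ => mul_pos (hppos a) (Real.exp_pos _)) Finset.univ_nonempty
    -- Claim 1: KL difference formula
    have claim1 : KLdiv pstar (p k) - KLdiv pstar (p (k + 1)) =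
        α * (∑ a, pstar a * Q k a) - Real.log Z := by
      unfold KLdiv
      rw [← Finset.sum_sub_distrib]
      have term : ∀ a : A, pstar a * Real.log (pstar a / p k a) -
          pstar a * Real.log (pstar a / p (k + 1) a) =
          pstar a * (α * Q k a) - pstar a * Real.log Z := by
        intro a
        rcases eq_or_lt_of_le (hps0 a) with h | h
        · rw [← h]; ring
        · have hrk := hrec k hkI a
          have hpk1 : p (k + 1) a = p k a * Real.exp (α * Q k a) / Z := hrk
          have hpk1pos : 0 < p (k + 1) a := by
            rw [hpk1]; exact div_pos (mul_pos (hppos a) (Real.exp_pos _)) hZ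
          rw [Real.log_div h.ne' (hppos a).ne', Real.log_div h.ne' hpk1pos.ne', hpk1,
            Real.log_div (mul_pos (hppos a) (Real.exp_pos _)).ne' hZ.ne',
            Real.log_mul (hppos a).ne' (Real.exp_pos _).ne', Real.log_exp]
          ring
      rw [Finset.sum_congr rfl (fun a _ => term a), Finset.sum_sub_distrib]
      have e1 : ∑ x, pstar x * (α * Q k x) = α * ∑ a, pstar a * Q k a := by
        rw [Finset.mul_sum]; exact Finset.sum_congr rfl (fun a _ => by ring)
      have e2 : ∑ x, pstar x * Real.log Z = Real.log Z := by
        rw [← Finset.sum_mul, hps1, one_mul]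
      rw [e1, e2]
    -- Claim 2: log partition bound
    have claim2 : Real.log Z ≤ α * (∑ a, p k a * Q k a) + α ^ 2 * H ^ 2 / 2 := by
      set S := ∑ a, p k a * Q k a with hSdef
      set T := 1 + α * (S - H) + α ^ 2 * H ^ 2 / 2 with hTdef
      have hZT : Z ≤ Real.exp (α * H) * T := by
        have termb : ∀ a : A, p k a * Real.exp (α * Q k a) ≤
            Real.exp (α * H) * (p k a * (1 + α * (Q k a - H) + α ^ 2 * H ^ 2 / 2)) := by
          intro a
          have hx : α * (Q k a - H) ≤ 0 :=
            mul_nonpos_of_nonneg_of_nonpos hα.le (by linarith [hQH k hkI a])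
          have hquad := exp_le_quadratic hx
          have hsq : (α * (Q k a - H)) ^ 2 ≤ α ^ 2 * H ^ 2 := by
            have h1 : (Q k a - H) ^ 2 ≤ H ^ 2 := by
              nlinarith [hQ0 k hkI a, hQH k hkI a]
            have := mul_le_mul_of_nonneg_left h1 (sq_nonneg α)
            calc (α * (Q k a - H)) ^ 2 = α ^ 2 * (Q k a - H) ^ 2 := by ring
              _ ≤ α ^ 2 * H ^ 2 := this
          have hsplit : Real.exp (α * Q k a) =
              Real.exp (α * H) * Real.exp (α * (Q k a - H)) := by
            rw [← Real.exp_add]; ring_nf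
          rw [hsplit]
          have hb : Real.exp (α * (Q k a - H)) ≤
              1 + α * (Q k a - H) + α ^ 2 * H ^ 2 / 2 := by
            calc Real.exp (α * (Q k a - H)) ≤
                1 + α * (Q k a - H) + (α * (Q k a - H)) ^ 2 / 2 := hquad
              _ ≤ 1 + α * (Q k a - H) + α ^ 2 * H ^ 2 / 2 := by linarith
          calc p k a * (Real.exp (α * H) * Real.exp (α * (Q k a - H)))
              ≤ p k a * (Real.exp (α * H) * (1 + α * (Q k a - H) + α ^ 2 * H ^ 2 / 2)) := by
                apply mul_le_mul_of_nonneg_left _ (hppos a).le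
                exact mul_le_mul_of_nonneg_left hb (Real.exp_pos _).le
            _ = Real.exp (α * H) * (p k a * (1 + α * (Q k a - H) + α ^ 2 * H ^ 2 / 2)) := by
                ring
        calc Z ≤ ∑ a, Real.exp (α * H) * (p k a * (1 + α * (Q k a - H) + α ^ 2 * H ^ 2 / 2)) :=
              Finset.sum_le_sum (fun a _ => termb a)
          _ = Real.exp (α * H) * T := by
              rw [← Finset.mul_sum]
              congr 1
              have : ∑ a, p k a * (1 + α * (Q k a - H) + α ^ 2 * H ^ 2 / 2) =
                  ∑ a, (p k a + α * (p k a * Q k a) - α * H * p k a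
                    + α ^ 2 * H ^ 2 / 2 * p k a) := by
                apply Finset.sum_congr rfl; intro a _; ring
              rw [this]
              simp only [Finset.sum_add_distrib, Finset.sum_sub_distrib, ← Finset.mul_sum,
                hpsum, hSdef]
              rw [hTdef]; ring
      have hT : 0 < T := by
        have : Z / Real.exp (α * H) ≤ T := (div_le_iff₀ (Real.exp_pos _)).mpr (by linarith [hZT])
        exact lt_of_lt_of_le (div_pos hZ (Real.exp_pos _)) this
      calc Real.log Z ≤ Real.log (Real.exp (α * H) * T) :=
            Real.log_le_log hZ hZT
        _ = α * H + Real.log T := by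
            rw [Real.log_mul (Real.exp_pos _).ne' hT.ne', Real.log_exp]
        _ ≤ α * H + (T - 1) := by linarith [Real.log_le_sub_one_of_pos hT]
        _ = α * S + α ^ 2 * H ^ 2 / 2 := by rw [hTdef]; ring
    -- combine
    have hsum_eq : ∑ a, Q k a * (pstar a - p k a) =
        (∑ a, pstar a * Q k a) - (∑ a, p k a * Q k a) := by
      rw [← Finset.sum_sub_distrib]
      apply Finset.sum_congr rfl; intro a _; ring
    have hkey : α * (∑ a, Q k a * (pstar a - p k a)) ≤
        (KLdiv pstar (p k) - KLdiv pstar (p (k + 1))) + α ^ 2 * H ^ 2 / 2 := by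
      rw [claim1, hsum_eq]; nlinarith [claim2]
    have hmul := mul_le_mul_of_nonneg_left hkey (inv_pos.mpr hα).le
    rw [← mul_assoc, inv_mul_cancel₀ hα.ne', one_mul] at hmul
    have h2 : α⁻¹ * ((KLdiv pstar (p k) - KLdiv pstar (p (k + 1))) + α ^ 2 * H ^ 2 / 2) =
        α⁻¹ * (KLdiv pstar (p k) - KLdiv pstar (p (k + 1))) + α * H ^ 2 / 2 := by
      field_simp
    linarith [hmul, h2.le, h2.ge]
  -- sum up and telescope
  have htel : ∑ k ∈ Finset.Icc 1 K,
      (KLdiv pstar (p k) - KLdiv pstar (p (k + 1))) =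
      KLdiv pstar (p 1) - KLdiv pstar (p (K + 1)) := by
    exact telescope_Icc (fun k => KLdiv pstar (p k)) K
  have hKLend : 0 ≤ KLdiv pstar (p (K + 1)) := by
    obtain ⟨h1, h2⟩ := hpos (K + 1) (by omega) le_rfl
    exact KLdiv_nonneg pstar (p (K + 1)) hps0 hps1 h1 h2
  calc ∑ k ∈ Finset.Icc 1 K, ∑ a, Q k a * (pstar a - p k a)
      ≤ ∑ k ∈ Finset.Icc 1 K, (α * H ^ 2 / 2 +
          α⁻¹ * (KLdiv pstar (p k) - KLdiv pstar (p (k + 1)))) :=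
        Finset.sum_le_sum step
    _ = K * (α * H ^ 2 / 2) + α⁻¹ * (KLdiv pstar (p 1) - KLdiv pstar (p (K + 1))) := by
        rw [Finset.sum_add_distrib, ← Finset.mul_sum, htel, Finset.sum_const,
          Nat.card_Icc, Nat.add_sub_cancel, nsmul_eq_mul]
    _ ≤ α * H ^ 2 * K / 2 + α⁻¹ * KLdiv pstar (p 1) := by
        have h1 : α⁻¹ * (KLdiv pstar (p 1) - KLdiv pstar (p (K + 1))) ≤
            α⁻¹ * KLdiv pstar (p 1) := by
          apply mul_le_mul_of_nonneg_left _ (inv_pos.mpr hα).le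
          linarith
        linarith
end

section
/- Instantiated mirror-descent regret bound with uniform initialization: Let A be a finite set with |A| ≥ 2, H > 0, K ≥ 1, let p¹ be the uniform distribution on A, let Q^k : A → [0,H] for k ∈ [K], set α = √(2·log|A| / (H²·K)), and define recursively p^{k+1}(a) = p^k(a)·exp(α·Q^k(a)) / Σ_{a'} p^k(a')·exp(α·Q^k(a')). Then for any p* ∈ Δ(A), Σ_{k=1}^{K} Σ_{a∈A} Q^k(a)·(p*(a) − p^k(a)) ≤ √(2·H²·K·log|A|). -/
open Finset

/-- Hoeffding-type mgf bound for a distribution on a finite set. -/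
lemma mgf_bound_aux {A : Type*} [Fintype A] (w q : A → ℝ) (H α : ℝ) (hH : 0 < H)
    (hw0 : ∀ a, 0 ≤ w a) (hw1 : ∑ a, w a = 1)
    (hq0 : ∀ a, 0 ≤ q a) (hqH : ∀ a, q a ≤ H) :
    ∑ a, w a * Real.exp (α * q a) ≤
      Real.exp (α * (∑ a, w a * q a) + α ^ 2 * H ^ 2 / 2) := by
  set m := ∑ a, w a * q a with hm
  have hm0 : 0 ≤ m := Finset.sum_nonneg fun a _ => mul_nonneg (hw0 a) (hq0 a)
  have hmH : m ≤ H := by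
    calc m ≤ ∑ a, w a * H := Finset.sum_le_sum fun a _ =>
              mul_le_mul_of_nonneg_left (hqH a) (hw0 a)
    _ = H := by rw [← Finset.sum_mul, hw1, one_mul]
  have hcenter : ∑ a, w a * (q a - m) = 0 := by
    simp only [mul_sub]
    rw [Finset.sum_sub_distrib, ← Finset.sum_mul, hw1, one_mul, ← hm, sub_self]
  have hpoint : ∀ a, Real.exp (α * (q a - m)) ≤
      (H - (q a - m)) / (2 * H) * Real.exp (-(α * H))
        + (H + (q a - m)) / (2 * H) * Real.exp (α * H) := by
    intro a
    set x := q a - m with hx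
    have hx1 : -H ≤ x := by simp only [hx]; nlinarith [hq0 a, hqH a]
    have hx2 : x ≤ H := by simp only [hx]; nlinarith [hq0 a, hqH a]
    have hla : 0 ≤ (H - x) / (2 * H) := div_nonneg (by linarith) (by linarith)
    have hmu : 0 ≤ (H + x) / (2 * H) := div_nonneg (by linarith) (by linarith)
    have hsum : (H - x) / (2 * H) + (H + x) / (2 * H) = 1 := by
      field_simp
      ring
    have hconv := convexOn_exp.2 (Set.mem_univ (-(α * H))) (Set.mem_univ (α * H))
      hla hmu hsum
    have h2H : (2 * H) ≠ 0 := by positivity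
    have harg : ((H - x) / (2 * H)) • (-(α * H)) + ((H + x) / (2 * H)) • (α * H) = α * x := by
      simp only [smul_eq_mul]
      rw [show (H - x) / (2 * H) * -(α * H) + (H + x) / (2 * H) * (α * H)
          = ((H - x) * -(α * H) + (H + x) * (α * H)) / (2 * H) by ring, div_eq_iff h2H]
      ring
    rw [harg] at hconv
    simpa only [smul_eq_mul] using hconv
  have hinner : ∑ a, w a * Real.exp (α * (q a - m)) ≤ Real.exp (α ^ 2 * H ^ 2 / 2) := by
    have h1 : ∑ a, w a * Real.exp (α * (q a - m)) ≤
        ∑ a, w a * ((H - (q a - m)) / (2 * H) * Real.exp (-(α * H))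
          + (H + (q a - m)) / (2 * H) * Real.exp (α * H)) :=
      Finset.sum_le_sum fun a _ => mul_le_mul_of_nonneg_left (hpoint a) (hw0 a)
    have h2 : ∑ a, w a * ((H - (q a - m)) / (2 * H) * Real.exp (-(α * H))
          + (H + (q a - m)) / (2 * H) * Real.exp (α * H)) = Real.cosh (α * H) := by
      have hrw : ∀ a, w a * ((H - (q a - m)) / (2 * H) * Real.exp (-(α * H))
          + (H + (q a - m)) / (2 * H) * Real.exp (α * H))
          = (w a * H - w a * (q a - m)) * (Real.exp (-(α * H)) / (2 * H))
            + (w a * H + w a * (q a - m)) * (Real.exp (α * H) / (2 * H)) := by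
        intro a; field_simp
      simp only [hrw]
      rw [Finset.sum_add_distrib, ← Finset.sum_mul, ← Finset.sum_mul,
        Finset.sum_sub_distrib, Finset.sum_add_distrib, hcenter,
        ← Finset.sum_mul, hw1, Real.cosh_eq]
      field_simp
      ring
    have h3 : Real.cosh (α * H) ≤ Real.exp ((α * H) ^ 2 / 2) :=
      Real.cosh_le_exp_half_sq (α * H)
    have h4 : (α * H) ^ 2 / 2 = α ^ 2 * H ^ 2 / 2 := by ring
    rw [h2] at h1
    rw [h4] at h3
    exact h1.trans h3
  have hsplit : ∑ a, w a * Real.exp (α * q a)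
      = Real.exp (α * m) * ∑ a, w a * Real.exp (α * (q a - m)) := by
    rw [Finset.mul_sum]
    refine Finset.sum_congr rfl fun a _ => ?_
    rw [← mul_assoc, mul_comm (Real.exp (α * m)) (w a), mul_assoc, ← Real.exp_add]
    ring_nf
  rw [hsplit, Real.exp_add]
  exact mul_le_mul_of_nonneg_left hinner (Real.exp_pos _).le

/-- Instantiated mirror-descent regret bound with uniform initialization. -/
theorem mirror_descent_regret_uniform {A : Type*} [Fintype A]
    (hA : 2 ≤ Fintype.card A)
    (H : ℝ) (hH : 0 < H) (K : ℕ) (hK : 1 ≤ K)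
    (α : ℝ) (hαdef : α = Real.sqrt (2 * Real.log (Fintype.card A) / (H ^ 2 * K)))
    (p : ℕ → A → ℝ) (hp1 : ∀ a, p 1 a = ((Fintype.card A : ℝ))⁻¹)
    (Q : ℕ → A → ℝ)
    (hQ0 : ∀ k ∈ Finset.Icc 1 K, ∀ a, 0 ≤ Q k a)
    (hQH : ∀ k ∈ Finset.Icc 1 K, ∀ a, Q k a ≤ H)
    (hrec : ∀ k ∈ Finset.Icc 1 K, ∀ a,
      p (k+1) a = p k a * Real.exp (α * Q k a) / ∑ a', p k a' * Real.exp (α * Q k a'))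
    (pstar : A → ℝ) (hps0 : ∀ a, 0 ≤ pstar a) (hps1 : ∑ a, pstar a = 1) :
    ∑ k ∈ Finset.Icc 1 K, ∑ a, Q k a * (pstar a - p k a) ≤
      Real.sqrt (2 * H ^ 2 * K * Real.log (Fintype.card A)) := by
  have hAne : Nonempty A := Fintype.card_pos_iff.mp (by omega)
  have hn1 : (1 : ℝ) < (Fintype.card A : ℝ) := by exact_mod_cast (by omega : 1 < Fintype.card A)
  have hn0 : (0 : ℝ) < (Fintype.card A : ℝ) := by linarith
  set L : ℝ := Real.log (Fintype.card A) with hLdef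
  have hL : 0 < L := Real.log_pos hn1
  have hKpos : (0 : ℝ) < (K : ℝ) := by exact_mod_cast (by omega : 0 < K)
  have hαpos : 0 < α := by
    rw [hαdef]
    exact Real.sqrt_pos.mpr (div_pos (by linarith) (mul_pos (pow_pos hH 2) hKpos))
  set Z : ℕ → ℝ := fun j => ∑ a', p j a' * Real.exp (α * Q j a') with hZdef
  -- key induction
  have key : ∀ k, k ≤ K → (∀ a, 0 < p (k+1) a) ∧ (∑ a, p (k+1) a = 1) ∧
      (∀ a, Real.log (p (k+1) a) = -L + ∑ j ∈ Finset.Icc 1 k, (α * Q j a - Real.log (Z j))) := by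
    intro k
    induction k with
    | zero =>
      intro _
      refine ⟨fun a => by rw [hp1]; positivity, ?_, fun a => by
        simp [hp1, Real.log_inv, hLdef]⟩
      simp only [hp1, Finset.sum_const, Finset.card_univ, nsmul_eq_mul]
      field_simp
    | succ k ih =>
      intro hk1
      obtain ⟨hpos, hsum, hlog⟩ := ih (by omega)
      have hmem : k + 1 ∈ Finset.Icc 1 K := by simp; omega
      have hZpos : 0 < Z (k+1) :=
        Finset.sum_pos (fun a _ => mul_pos (hpos a) (Real.exp_pos _)) Finset.univ_nonempty
      refine ⟨fun a => ?_, ?_, fun a => ?_⟩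
      · rw [hrec _ hmem a]
        exact div_pos (mul_pos (hpos a) (Real.exp_pos _)) hZpos
      · simp only [hrec _ hmem]
        rw [← Finset.sum_div, div_self hZpos.ne']
      · rw [hrec _ hmem a, Real.log_div (mul_pos (hpos a) (Real.exp_pos _)).ne' hZpos.ne',
          Real.log_mul (hpos a).ne' (Real.exp_ne_zero _), Real.log_exp, hlog a,
          Finset.sum_Icc_succ_top (by omega : 1 ≤ k + 1)]
        ring
  obtain ⟨hposK, hsumK, hlogK⟩ := key K le_rfl
  -- mgf bound on each Z j
  have hmgf : ∀ j ∈ Finset.Icc 1 K, Real.log (Z j) ≤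
      α * (∑ a, p j a * Q j a) + α ^ 2 * H ^ 2 / 2 := by
    intro j hj
    obtain ⟨hj1, hjK⟩ := Finset.mem_Icc.mp hj
    obtain ⟨i, rfl⟩ : ∃ i, j = i + 1 := ⟨j - 1, by omega⟩
    obtain ⟨hpos, hsum, _⟩ := key i (by omega)
    have hZpos : 0 < Z (i+1) :=
      Finset.sum_pos (fun a _ => mul_pos (hpos a) (Real.exp_pos _)) Finset.univ_nonempty
    have hb := mgf_bound_aux (p (i+1)) (Q (i+1)) H α hH (fun a => (hpos a).le) hsum
      (hQ0 _ hj) (hQH _ hj)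
    exact (Real.log_le_iff_le_exp hZpos).mpr hb
  -- per-action inequality
  have hSa : ∀ a, α * (∑ j ∈ Finset.Icc 1 K, Q j a) ≤
      L + ∑ j ∈ Finset.Icc 1 K, Real.log (Z j) := by
    intro a
    have h1 : p (K+1) a ≤ 1 := by
      rw [← hsumK]
      exact Finset.single_le_sum (fun b _ => (hposK b).le) (Finset.mem_univ a)
    have h2 : Real.log (p (K+1) a) ≤ 0 := Real.log_nonpos (hposK a).le h1
    have h3 := hlogK a
    rw [show ∑ j ∈ Finset.Icc 1 K, (α * Q j a - Real.log (Z j))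
        = α * (∑ j ∈ Finset.Icc 1 K, Q j a) - ∑ j ∈ Finset.Icc 1 K, Real.log (Z j) by
      rw [Finset.sum_sub_distrib, Finset.mul_sum]] at h3
    linarith
  -- weighted by pstar
  have hw : α * (∑ a, pstar a * ∑ j ∈ Finset.Icc 1 K, Q j a) ≤
      L + ∑ j ∈ Finset.Icc 1 K, Real.log (Z j) := by
    calc α * (∑ a, pstar a * ∑ j ∈ Finset.Icc 1 K, Q j a)
        = ∑ a, pstar a * (α * ∑ j ∈ Finset.Icc 1 K, Q j a) := by
          rw [Finset.mul_sum]; exact Finset.sum_congr rfl fun a _ => by ring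
      _ ≤ ∑ a, pstar a * (L + ∑ j ∈ Finset.Icc 1 K, Real.log (Z j)) :=
          Finset.sum_le_sum fun a _ => mul_le_mul_of_nonneg_left (hSa a) (hps0 a)
      _ = L + ∑ j ∈ Finset.Icc 1 K, Real.log (Z j) := by
          rw [← Finset.sum_mul, hps1, one_mul]
  -- sum of log Z bounds
  have hZsum : ∑ j ∈ Finset.Icc 1 K, Real.log (Z j) ≤
      α * (∑ j ∈ Finset.Icc 1 K, ∑ a, p j a * Q j a) + K * (α ^ 2 * H ^ 2 / 2) := by
    calc ∑ j ∈ Finset.Icc 1 K, Real.log (Z j)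
        ≤ ∑ j ∈ Finset.Icc 1 K, (α * (∑ a, p j a * Q j a) + α ^ 2 * H ^ 2 / 2) :=
          Finset.sum_le_sum hmgf
      _ = α * (∑ j ∈ Finset.Icc 1 K, ∑ a, p j a * Q j a) + K * (α ^ 2 * H ^ 2 / 2) := by
          rw [Finset.sum_add_distrib, Finset.sum_const, Nat.card_Icc, Finset.mul_sum]
          simp [nsmul_eq_mul]
  -- rewrite regret
  have hR : ∑ k ∈ Finset.Icc 1 K, ∑ a, Q k a * (pstar a - p k a)
      = (∑ a, pstar a * ∑ j ∈ Finset.Icc 1 K, Q j a)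
        - ∑ j ∈ Finset.Icc 1 K, ∑ a, p j a * Q j a := by
    have h1 : ∀ k, ∑ a, Q k a * (pstar a - p k a)
        = ∑ a, pstar a * Q k a - ∑ a, p k a * Q k a := by
      intro k
      rw [← Finset.sum_sub_distrib]
      exact Finset.sum_congr rfl fun a _ => by ring
    simp only [h1]
    rw [Finset.sum_sub_distrib]
    congr 1
    rw [Finset.sum_comm]
    exact Finset.sum_congr rfl fun a _ => by rw [Finset.mul_sum]
  -- combine
  have hmain : α * (∑ k ∈ Finset.Icc 1 K, ∑ a, Q k a * (pstar a - p k a)) ≤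
      L + K * (α ^ 2 * H ^ 2 / 2) := by
    rw [hR, mul_sub]
    linarith
  have hα2 : α ^ 2 = 2 * L / (H ^ 2 * K) := by
    rw [hαdef, Real.sq_sqrt (le_of_lt (div_pos (by linarith) (mul_pos (pow_pos hH 2) hKpos)))]
  have hfin : L + K * (α ^ 2 * H ^ 2 / 2) = 2 * L := by
    rw [hα2]; field_simp; ring
  rw [hfin] at hmain
  have hsqrt : Real.sqrt (2 * H ^ 2 * K * L) = 2 * L / α := by
    rw [eq_div_iff hαpos.ne', hαdef, ← Real.sqrt_mul (by positivity),
      show 2 * H ^ 2 * K * L * (2 * L / (H ^ 2 * K)) = (2 * L) ^ 2 by field_simp]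
    exact Real.sqrt_sq (by positivity)
  rw [hsqrt, le_div_iff₀ hαpos]
  linarith
end

section
/- Expected value decomposition against a comparator policy: Fix policies π* and π, functions Q_h : S × A → ℝ for h ∈ [H], define V_h(x) = Σ_{a} π_h(a|x)·Q_h(x,a) for h ∈ [H] and V_{H+1} ≡ 0, and the model prediction error ι_h = r_h + P_h V_{h+1} − Q_h. Then for any initial state x₁ ∈ S, V^{π*}_1(x₁) − V_1(x₁) = Σ_{h=1}^{H} Σ_{x∈S} Σ_{a∈A} μ^{π*}_h(x)·π*_h(a|x)·ι_h(x,a) + Σ_{h=1}^{H} Σ_{x∈S} μ^{π*}_h(x)·Σ_{a∈A} Q_h(x,a)·(π*_h(a|x) − π_h(a|x)). -/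
open Finset

variable {S A : Type*}

lemma Vval_rec [Fintype S] [Fintype A] (H : ℕ) (P : ℕ → S → A → S → ℝ)
    (r : ℕ → S → A → ℝ) (po : ℕ → S → A → ℝ) {h : ℕ} (hh : h ≤ H) (x : S) :
    Vval H P r po h x
      = ∑ a, po h x a * (r h x a + ∑ x', P h x a x' * Vval H P r po (h+1) x') := by
  have h1 : H + 1 - h = (H - h) + 1 := by omega
  have h2 : H + 1 - (h+1) = H - h := by omega
  simp only [Vval, h1, h2, Vrem]

lemma Vval_end [Fintype S] [Fintype A] (H : ℕ) (P : ℕ → S → A → S → ℝ)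
    (r : ℕ → S → A → ℝ) (po : ℕ → S → A → ℝ) (x : S) :
    Vval H P r po (H+1) x = 0 := by
  simp only [Vval, Nat.sub_self, Vrem]

/-- Expected value decomposition against a comparator policy. -/
theorem expected_value_decomposition [Fintype S] [Fintype A] [Nonempty A] [DecidableEq S]
    (H : ℕ) (hH : 1 ≤ H)
    (P : ℕ → S → A → S → ℝ)
    (hP0 : ∀ h ∈ Finset.Icc 1 H, ∀ x a x', 0 ≤ P h x a x')
    (hP1 : ∀ h ∈ Finset.Icc 1 H, ∀ x a, ∑ x', P h x a x' = 1)
    (r : ℕ → S → A → ℝ)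
    (hr : ∀ h ∈ Finset.Icc 1 H, ∀ x a, 0 ≤ r h x a ∧ r h x a ≤ 1)
    (po pistar : ℕ → S → A → ℝ)
    (hpo0 : ∀ h ∈ Finset.Icc 1 H, ∀ x a, 0 ≤ po h x a)
    (hpo1 : ∀ h ∈ Finset.Icc 1 H, ∀ x, ∑ a, po h x a = 1)
    (hpistar0 : ∀ h ∈ Finset.Icc 1 H, ∀ x a, 0 ≤ pistar h x a)
    (hpistar1 : ∀ h ∈ Finset.Icc 1 H, ∀ x, ∑ a, pistar h x a = 1)
    (Q : ℕ → S → A → ℝ) (V : ℕ → S → ℝ)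
    (hV : ∀ h ∈ Finset.Icc 1 H, ∀ x, V h x = ∑ a, po h x a * Q h x a)
    (hVend : ∀ x, V (H+1) x = 0)
    (x₁ : S) :
    Vval H P r pistar 1 x₁ - V 1 x₁ =
      (∑ h ∈ Finset.Icc 1 H, ∑ x, ∑ a,
        stateDist P pistar x₁ h x * pistar h x a *
          (r h x a + (∑ x', P h x a x' * V (h+1) x') - Q h x a))
      + ∑ h ∈ Finset.Icc 1 H, ∑ x, stateDist P pistar x₁ h x *
          ∑ a, Q h x a * (pistar h x a - po h x a) := by
  have hstep : ∀ h, 1 ≤ h → h ≤ H →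
      (∑ x, stateDist P pistar x₁ h x * (Vval H P r pistar h x - V h x))
      = ((∑ x, ∑ a, stateDist P pistar x₁ h x * pistar h x a *
            (r h x a + (∑ x', P h x a x' * V (h+1) x') - Q h x a))
        + ∑ x, stateDist P pistar x₁ h x * ∑ a, Q h x a * (pistar h x a - po h x a))
        + ∑ x', stateDist P pistar x₁ (h+1) x' *
            (Vval H P r pistar (h+1) x' - V (h+1) x') := by
    intro h h1 h2
    have hmem : h ∈ Finset.Icc 1 H := Finset.mem_Icc.mpr ⟨h1, h2⟩
    obtain ⟨m, rfl⟩ : ∃ m, h = m + 1 := ⟨h - 1, by omega⟩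
    have hsd : ∀ x' : S, stateDist P pistar x₁ (m+1+1) x'
        = ∑ x, ∑ a, stateDist P pistar x₁ (m+1) x * pistar (m+1) x a * P (m+1) x a x' := by
      intro x'; rfl
    have hpt : ∀ x : S, Vval H P r pistar (m+1) x - V (m+1) x
        = (∑ a, pistar (m+1) x a *
              (r (m+1) x a + (∑ x', P (m+1) x a x' * V (m+1+1) x') - Q (m+1) x a))
          + (∑ a, Q (m+1) x a * (pistar (m+1) x a - po (m+1) x a))
          + ∑ a, pistar (m+1) x a *
              ∑ x', P (m+1) x a x' * (Vval H P r pistar (m+1+1) x' - V (m+1+1) x') := by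
      intro x
      rw [Vval_rec H P r pistar h2 x, hV _ hmem]
      rw [← Finset.sum_add_distrib, ← Finset.sum_add_distrib, ← Finset.sum_sub_distrib]
      refine Finset.sum_congr rfl fun a _ => ?_
      have hs : (∑ x', P (m+1) x a x' * (Vval H P r pistar (m+1+1) x' - V (m+1+1) x'))
          = (∑ x', P (m+1) x a x' * Vval H P r pistar (m+1+1) x')
            - ∑ x', P (m+1) x a x' * V (m+1+1) x' := by
        rw [← Finset.sum_sub_distrib]
        exact Finset.sum_congr rfl fun _ _ => by ring
      rw [hs]; ring
    have key : (∑ x, stateDist P pistar x₁ (m+1) x * ∑ a, pistar (m+1) x a *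
          ∑ x', P (m+1) x a x' * (Vval H P r pistar (m+1+1) x' - V (m+1+1) x'))
        = ∑ x', stateDist P pistar x₁ (m+1+1) x' *
            (Vval H P r pistar (m+1+1) x' - V (m+1+1) x') := by
      simp only [hsd, Finset.sum_mul, Finset.mul_sum]
      conv_rhs => rw [Finset.sum_comm]
      refine Finset.sum_congr rfl fun x _ => ?_
      rw [Finset.sum_comm]
      refine Finset.sum_congr rfl fun a _ => ?_
      refine Finset.sum_congr rfl fun x' _ => ?_
      ring
    calc (∑ x, stateDist P pistar x₁ (m+1) x * (Vval H P r pistar (m+1) x - V (m+1) x))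
        = ∑ x, (stateDist P pistar x₁ (m+1) x *
              (∑ a, pistar (m+1) x a *
                (r (m+1) x a + (∑ x', P (m+1) x a x' * V (m+1+1) x') - Q (m+1) x a))
            + stateDist P pistar x₁ (m+1) x *
              (∑ a, Q (m+1) x a * (pistar (m+1) x a - po (m+1) x a))
            + stateDist P pistar x₁ (m+1) x *
              ∑ a, pistar (m+1) x a *
                ∑ x', P (m+1) x a x' * (Vval H P r pistar (m+1+1) x' - V (m+1+1) x')) := by
            refine Finset.sum_congr rfl fun x _ => ?_
            rw [hpt x]; ring
      _ = (∑ x, stateDist P pistar x₁ (m+1) x *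
              (∑ a, pistar (m+1) x a *
                (r (m+1) x a + (∑ x', P (m+1) x a x' * V (m+1+1) x') - Q (m+1) x a)))
          + (∑ x, stateDist P pistar x₁ (m+1) x *
              (∑ a, Q (m+1) x a * (pistar (m+1) x a - po (m+1) x a)))
          + ∑ x, stateDist P pistar x₁ (m+1) x *
              ∑ a, pistar (m+1) x a *
                ∑ x', P (m+1) x a x' * (Vval H P r pistar (m+1+1) x' - V (m+1+1) x') := by
            rw [Finset.sum_add_distrib, Finset.sum_add_distrib]
      _ = ((∑ x, ∑ a, stateDist P pistar x₁ (m+1) x * pistar (m+1) x a *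
            (r (m+1) x a + (∑ x', P (m+1) x a x' * V (m+1+1) x') - Q (m+1) x a))
        + ∑ x, stateDist P pistar x₁ (m+1) x *
            ∑ a, Q (m+1) x a * (pistar (m+1) x a - po (m+1) x a))
        + ∑ x', stateDist P pistar x₁ (m+1+1) x' *
            (Vval H P r pistar (m+1+1) x' - V (m+1+1) x') := by
            rw [key]
            congr 2
            refine Finset.sum_congr rfl fun x _ => ?_
            rw [Finset.mul_sum]
            exact Finset.sum_congr rfl fun a _ => by ring
  have hmain : ∀ n k, k + n = H + 1 → 1 ≤ k →
      (∑ x, stateDist P pistar x₁ k x * (Vval H P r pistar k x - V k x))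
      = ∑ h ∈ Finset.Icc k H,
          ((∑ x, ∑ a, stateDist P pistar x₁ h x * pistar h x a *
              (r h x a + (∑ x', P h x a x' * V (h+1) x') - Q h x a))
            + ∑ x, stateDist P pistar x₁ h x *
                ∑ a, Q h x a * (pistar h x a - po h x a)) := by
    intro n
    induction n with
    | zero =>
        intro k hk _
        have hkH : k = H + 1 := by omega
        subst hkH
        rw [Finset.Icc_eq_empty (by omega), Finset.sum_empty]
        simp [Vval_end, hVend]
    | succ n ih =>
        intro k hk hk1
        have hkH : k ≤ H := by omega
        rw [hstep k hk1 hkH, ih (k+1) (by omega) (by omega)]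
        rw [← Finset.Ico_add_one_right_eq_Icc, ← Finset.Ico_add_one_right_eq_Icc,
          Finset.sum_eq_sum_Ico_succ_bot (show k < H + 1 by omega)]
  have hD1 : (∑ x, stateDist P pistar x₁ 1 x * (Vval H P r pistar 1 x - V 1 x))
      = Vval H P r pistar 1 x₁ - V 1 x₁ := by
    simp [stateDist, ite_mul]
  rw [← hD1, hmain H 1 (by omega) le_rfl, Finset.sum_add_distrib]
end

section
/- Elliptical potential lemma, first part: Let Λ₀ be a d × d real symmetric positive-definite matrix, let φ_1, φ_2, … be vectors in ℝ^d, and define Λ_j = Λ₀ + Σ_{i=1}^{j−1} φ_i φ_iᵀ for j ≥ 1 (so Λ_1 = Λ₀). Then for every t ≥ 1, Σ_{j=1}^{t} min{ 1, φ_jᵀ Λ_j^{−1} φ_j } ≤ 2 · log( det(Λ_{t+1}) / det(Λ_1) ). -/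
open Matrix Finset

lemma psd_vecMulVec {d : ℕ} (u : Fin d → ℝ) : (vecMulVec u u).PosSemidef := by
  have h : vecMulVec u u = replicateCol (Fin 1) u * (replicateCol (Fin 1) u)ᴴ := by
    rw [vecMulVec_eq (Fin 1), conjTranspose_replicateCol]
    simp [star_trivial]; rfl
  rw [h]
  exact posSemidef_self_mul_conjTranspose _

lemma psd_add {d : ℕ} {A B : Matrix (Fin d) (Fin d) ℝ}
    (hA : A.PosSemidef) (hB : B.PosSemidef) : (A + B).PosSemidef :=
  .of_dotProduct_mulVec_nonneg (hA.1.add hB.1) fun x => by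
    rw [add_mulVec, dotProduct_add]
    exact add_nonneg (hA.dotProduct_mulVec_nonneg x) (hB.dotProduct_mulVec_nonneg x)

lemma psd_sum {d : ℕ} (s : Finset ℕ) (φ : ℕ → Fin d → ℝ) :
    (∑ i ∈ s, vecMulVec (φ i) (φ i)).PosSemidef := by
  classical
  induction s using Finset.induction_on with
  | empty => simpa using Matrix.PosSemidef.zero
  | insert a s h ih =>
    rw [Finset.sum_insert h]
    exact psd_add (psd_vecMulVec _) ih

lemma det_rank_one_update {d : ℕ} {A : Matrix (Fin d) (Fin d) ℝ} (hA : A.PosDef)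
    (u : Fin d → ℝ) :
    (A + vecMulVec u u).det = A.det * (1 + u ⬝ᵥ (A⁻¹ *ᵥ u)) := by
  rw [vecMulVec_eq (Fin 1), det_add_mul _ _ (isUnit_iff_ne_zero.mpr hA.det_pos.ne')]
  congr 1
  rw [det_unique]
  simp only [Matrix.mul_apply, Matrix.add_apply, Matrix.one_apply_eq, replicateRow_apply, replicateCol_apply,
    dotProduct, mulVec, Finset.mul_sum, Finset.sum_mul]
  congr 1
  rw [Finset.sum_comm]
  exact Finset.sum_congr rfl fun x _ => Finset.sum_congr rfl fun i _ => by ring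

/-- `x/2 ≤ log (1+x)` for `0 ≤ x ≤ 1`, and `1 ≤ 2 log (1+x)` for `x ≥ 1`. -/
lemma min_le_two_log (x : ℝ) (hx : 0 ≤ x) : min 1 x ≤ 2 * Real.log (1 + x) := by
  have h1x : (0:ℝ) < 1 + x := by linarith
  rcases le_or_gt x 1 with h | h
  · have key : x / (1 + x) ≤ Real.log (1 + x) := by
      have := Real.log_le_sub_one_of_pos (x := (1+x)⁻¹) (by positivity)
      rw [Real.log_inv] at this
      have : -( (1+x)⁻¹ - 1) ≤ Real.log (1 + x) := by linarith
      calc x / (1 + x) = -((1+x)⁻¹ - 1) := by field_simp; ring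
        _ ≤ _ := this
    have h2 : x / 2 ≤ x / (1 + x) := by
      apply div_le_div_of_nonneg_left hx h1x (by linarith)
    rw [min_eq_right h]
    linarith
  · rw [min_eq_left h.le]
    have : Real.log 2 ≤ Real.log (1 + x) := by
      apply Real.log_le_log (by norm_num); linarith
    have h2 : (0.6931471803 : ℝ) ≤ Real.log 2 := Real.log_two_gt_d9.le
    linarith

/-- Elliptical potential lemma, first part. -/
theorem elliptical_potential_one (d : ℕ)
    (Λ₀ : Matrix (Fin d) (Fin d) ℝ) (hΛ₀ : Λ₀.PosDef)
    (φ : ℕ → Fin d → ℝ)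
    (Λ : ℕ → Matrix (Fin d) (Fin d) ℝ)
    (hΛ : ∀ j, Λ j = Λ₀ + ∑ i ∈ Finset.Icc 1 (j - 1), vecMulVec (φ i) (φ i))
    (t : ℕ) (ht : 1 ≤ t) :
    ∑ j ∈ Finset.Icc 1 t, min 1 (φ j ⬝ᵥ ((Λ j)⁻¹ *ᵥ φ j)) ≤
      2 * Real.log ((Λ (t + 1)).det / (Λ 1).det) := by
  -- each Λ j is PosDef
  have hpos : ∀ j, (Λ j).PosDef := by
    intro j
    rw [hΛ j]
    exact hΛ₀.add_posSemidef (psd_sum _ _)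
  -- step identity
  have hstep : ∀ j, 1 ≤ j → Λ (j + 1) = Λ j + vecMulVec (φ j) (φ j) := by
    intro j hj
    rw [hΛ (j+1), hΛ j, Nat.add_sub_cancel, add_assoc]
    congr 1
    have : j = (j - 1) + 1 := (Nat.succ_pred_eq_of_pos hj).symm
    rw [this, Finset.sum_Icc_succ_top (by omega), ← this]
  -- q j nonneg
  have hq : ∀ j, 0 ≤ φ j ⬝ᵥ ((Λ j)⁻¹ *ᵥ φ j) := by
    intro j
    have := ((hpos j).inv).posSemidef.dotProduct_mulVec_nonneg (φ j)
    simpa [star_trivial] using this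
  -- det identity
  have hdet : ∀ j, 1 ≤ j →
      (Λ (j+1)).det = (Λ j).det * (1 + φ j ⬝ᵥ ((Λ j)⁻¹ *ᵥ φ j)) := by
    intro j hj
    rw [hstep j hj, det_rank_one_update (hpos j)]
  -- pointwise bound
  have hbound : ∀ j, 1 ≤ j →
      min 1 (φ j ⬝ᵥ ((Λ j)⁻¹ *ᵥ φ j)) ≤
        2 * (Real.log (Λ (j+1)).det - Real.log (Λ j).det) := by
    intro j hj
    have h1 : Real.log (Λ (j+1)).det - Real.log (Λ j).det
        = Real.log (1 + φ j ⬝ᵥ ((Λ j)⁻¹ *ᵥ φ j)) := by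
      rw [hdet j hj, Real.log_mul (hpos j).det_pos.ne' (by have := hq j; positivity)]
      ring
    rw [h1]
    exact min_le_two_log _ (hq j)
  -- sum up
  calc ∑ j ∈ Finset.Icc 1 t, min 1 (φ j ⬝ᵥ ((Λ j)⁻¹ *ᵥ φ j))
      ≤ ∑ j ∈ Finset.Icc 1 t, 2 * (Real.log (Λ (j+1)).det - Real.log (Λ j).det) := by
        apply Finset.sum_le_sum
        intro j hj
        exact hbound j (Finset.mem_Icc.mp hj).1
    _ = 2 * (Real.log (Λ (t+1)).det - Real.log (Λ 1).det) := by
        rw [← Finset.mul_sum]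
        congr 1
        have hIcc : Finset.Icc 1 t = Finset.Ico 1 (t+1) := by
          rw [Finset.Ico_add_one_right_eq_Icc]
        rw [hIcc, Finset.sum_Ico_eq_sum_range]
        have ht1 : t + 1 - 1 = t := by omega
        rw [ht1]
        have := Finset.sum_range_sub (fun i => Real.log (Λ (i+1)).det) t
        simpa [add_comm, add_left_comm, add_assoc] using this
    _ = 2 * Real.log ((Λ (t + 1)).det / (Λ 1).det) := by
        rw [Real.log_div (hpos (t+1)).det_pos.ne' (hpos 1).det_pos.ne']
end
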